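/- There is a bijection between standard barely set-valued tableaux of shape 2×b and restricted bicolored Motzkin paths of length 2b+1 with exactly one horizontal step. -/

import Mathlib

/-- Steps of a bicolored Motzkin path: up, down, red horizontal, blue horizontal. -/
inductive MStep where
  | U : MStep
  | D : MStep
  | Hr : MStep
  | Hb : MStep
deriving DecidableEq

/-- The vertical displacement of a step. -/
def sval : MStep → ℤ
  | .U => 1
  | .D => -1
  | _ => 0

/-- The height of the path after `j` steps. -/
def hgt (ℓ : ℕ) (s : Fin ℓ → MStep) (j : ℕ) : ℤ :=
  ∑ k ∈ Finset.range j, if h : k < ℓ then sval (s ⟨k, h⟩) else 0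

/-- A restricted bicolored Motzkin path of length `ℓ`: ends at height 0, never goes
below the x-axis, red horizontal steps never occur at height zero, and blue horizontal
steps never occur before the first down step. -/
def IsRBM (ℓ : ℕ) (s : Fin ℓ → MStep) : Prop :=
  hgt ℓ s ℓ = 0 ∧ (∀ j ≤ ℓ, 0 ≤ hgt ℓ s j) ∧
  (∀ j : Fin ℓ, s j = MStep.Hr → hgt ℓ s j ≠ 0) ∧
  (∀ j : Fin ℓ, s j = MStep.Hb → ∃ k : Fin ℓ, k < j ∧ s k = MStep.D)

/-- A standard barely set-valued tableau of shape `2×b`: nonempty entry sets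
partitioning `{1,…,2b+1}`, exactly one box a doubleton, strictly increasing
southeastwards (`max < min`). -/
def IsBSVT2 (b : ℕ) (S : Fin 2 × Fin b → Finset ℕ) : Prop :=
  (∀ p, (S p).Nonempty) ∧
  (∀ k, k ∈ Finset.Icc 1 (2 * b + 1) ↔ ∃ p, k ∈ S p) ∧
  (∀ p q, p ≠ q → Disjoint (S p) (S q)) ∧
  (∃ p₀, (S p₀).card = 2 ∧ ∀ p, p ≠ p₀ → (S p).card = 1) ∧
  (∀ p q, p < q → ∀ x ∈ S p, ∀ y ∈ S q, x < y)

open Finset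

def cnt (t : ℕ → MStep) (e : MStep) (k : ℕ) : ℕ :=
  ((Finset.range k).filter (fun j => t j = e)).card

lemma cnt_zero (t : ℕ → MStep) (e : MStep) : cnt t e 0 = 0 := by simp [cnt]

lemma cnt_succ (t : ℕ → MStep) (e : MStep) (k : ℕ) :
    cnt t e (k+1) = cnt t e k + (if t k = e then 1 else 0) := by
  unfold cnt
  rw [Finset.range_add_one, Finset.filter_insert]
  split
  · rw [Finset.card_insert_of_notMem (by simp)]
  · simp

lemma cnt_mono (t : ℕ → MStep) (e : MStep) {k k' : ℕ} (h : k ≤ k') :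
    cnt t e k ≤ cnt t e k' :=
  Finset.card_le_card (Finset.filter_subset_filter _ (Finset.range_subset_range.2 h))

lemma lt_of_cnt_lt (t : ℕ → MStep) (e : MStep) {k k' : ℕ}
    (h : cnt t e k < cnt t e k') : k < k' := by
  by_contra hc; push_neg at hc; exact absurd (cnt_mono t e hc) (by omega)

lemma cnt_congr {t t' : ℕ → MStep} (e : MStep) {k : ℕ} (h : ∀ j < k, t j = t' j) :
    cnt t e k = cnt t' e k := by
  unfold cnt
  congr 1
  apply Finset.filter_congr
  intro j hj
  rw [Finset.mem_range] at hj
  rw [h j hj]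

lemma cnt_total (t : ℕ → MStep) (k : ℕ) :
    cnt t .U k + cnt t .D k + (cnt t .Hr k + cnt t .Hb k) = k := by
  induction k with
  | zero => simp [cnt]
  | succ n ih =>
      rw [cnt_succ, cnt_succ, cnt_succ, cnt_succ]
      cases h : t n <;> simp [h] <;> omega

lemma cnt_ivt (t : ℕ → MStep) (e : MStep) (n v : ℕ) (h : v ≤ cnt t e n) :
    ∃ k, k ≤ n ∧ cnt t e k = v := by
  induction n with
  | zero =>
      have h0 := cnt_zero t e
      exact ⟨0, le_rfl, by omega⟩
  | succ n ih =>
      by_cases hv : v ≤ cnt t e n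
      · obtain ⟨k, hk, hk'⟩ := ih hv
        exact ⟨k, by omega, hk'⟩
      · have hs : cnt t e (n+1) ≤ cnt t e n + 1 := by
          rw [cnt_succ]; split <;> omega
        exact ⟨n+1, le_rfl, by omega⟩

open Classical in
lemma cnt_least (t : ℕ → MStep) (e : MStep) {n v : ℕ} (hv : 1 ≤ v) (h : v ≤ cnt t e n) :
    ∃ k, 1 ≤ k ∧ k ≤ n ∧ cnt t e k = v ∧ t (k-1) = e ∧ ∀ k', cnt t e k' = v → k ≤ k' := by
  obtain ⟨k0, hk0n, hk0⟩ := cnt_ivt t e n v h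
  have hex : ∃ k, cnt t e k = v := ⟨k0, hk0⟩
  have hspec : cnt t e (Nat.find hex) = v := Nat.find_spec hex
  have hmin : ∀ k', cnt t e k' = v → Nat.find hex ≤ k' := fun k' h' => Nat.find_min' hex h'
  set k := Nat.find hex with hkdef
  have hk1 : 1 ≤ k := by
    rcases Nat.eq_zero_or_pos k with h0 | h1
    · rw [h0, cnt_zero] at hspec; omega
    · exact h1
  have hkn : k ≤ n := le_trans (hmin k0 hk0) hk0n
  refine ⟨k, hk1, hkn, hspec, ?_, hmin⟩
  by_contra hne
  have he : cnt t e (k-1+1) = cnt t e (k-1) := by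
    rw [cnt_succ, if_neg hne]; omega
  have hk' : k - 1 + 1 = k := by omega
  rw [hk'] at he
  have := hmin (k-1) (by omega)
  omega

def te (ℓ : ℕ) (s : Fin ℓ → MStep) : ℕ → MStep :=
  fun j => if h : j < ℓ then s ⟨j, h⟩ else MStep.Hr

lemma te_lt {ℓ : ℕ} (s : Fin ℓ → MStep) {j : ℕ} (h : j < ℓ) :
    te ℓ s j = s ⟨j, h⟩ := dif_pos h

lemma hgt_eq (ℓ : ℕ) (s : Fin ℓ → MStep) (j : ℕ) :
    hgt ℓ s j = (cnt (te ℓ s) .U j : ℤ) - (cnt (te ℓ s) .D j : ℤ) := by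
  induction j with
  | zero => simp [hgt, cnt]
  | succ n ih =>
      rw [hgt, Finset.sum_range_succ, ← hgt, ih, cnt_succ, cnt_succ]
      by_cases h : n < ℓ
      · rw [dif_pos h, show s ⟨n, h⟩ = te ℓ s n from (te_lt s h).symm]
        cases hte : te ℓ s n <;> simp [hte, sval] <;> omega
      · rw [dif_neg h, show te ℓ s n = MStep.Hr from dif_neg h]
        simp

example (b : ℕ) (c : Fin b) : (Finset.Iic c).card = c.1 + 1 := Fin.card_Iic c

def gBox (b : ℕ) (t : ℕ → MStep) (p : Fin 2 × Fin b) : Finset ℕ :=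
  (Finset.Icc 1 (2*b+1)).filter (fun k =>
    if p.1 = 0 then (t (k-1) = MStep.U ∨ t (k-1) = MStep.Hr) ∧ cnt t MStep.U k = p.2.1 + 1
    else (t (k-1) = MStep.D ∨ t (k-1) = MStep.Hb) ∧ cnt t MStep.D k = p.2.1 + 1)

lemma mem_gBox0 {b : ℕ} {t : ℕ → MStep} {k : ℕ} {c : Fin b} :
    k ∈ gBox b t (0, c) ↔
      (1 ≤ k ∧ k ≤ 2*b+1) ∧ (t (k-1) = MStep.U ∨ t (k-1) = MStep.Hr) ∧
        cnt t MStep.U k = c.1 + 1 := by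
  simp [gBox, Finset.mem_Icc, and_assoc]

lemma mem_gBox1 {b : ℕ} {t : ℕ → MStep} {k : ℕ} {c : Fin b} :
    k ∈ gBox b t (1, c) ↔
      (1 ≤ k ∧ k ≤ 2*b+1) ∧ (t (k-1) = MStep.D ∨ t (k-1) = MStep.Hb) ∧
        cnt t MStep.D k = c.1 + 1 := by
  simp [gBox, Finset.mem_Icc, and_assoc, if_neg (show ¬((1:Fin 2) = 0) by decide)]

lemma fin2 (i : Fin 2) : i = 0 ∨ i = 1 := by omega

lemma gBox_eq {b : ℕ} {t : ℕ → MStep} {k : ℕ} {p q : Fin 2 × Fin b}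
    (hp : k ∈ gBox b t p) (hq : k ∈ gBox b t q) : p = q := by
  obtain ⟨i, c⟩ := p
  obtain ⟨i', c'⟩ := q
  rcases fin2 i with rfl | rfl <;> rcases fin2 i' with rfl | rfl
  · rw [mem_gBox0] at hp hq
    have : c = c' := Fin.ext (by omega)
    rw [this]
  · rw [mem_gBox0] at hp; rw [mem_gBox1] at hq
    rcases hp.2.1 with h1 | h1 <;> rcases hq.2.1 with h2 | h2 <;> rw [h1] at h2 <;> cases h2
  · rw [mem_gBox1] at hp; rw [mem_gBox0] at hq
    rcases hp.2.1 with h1 | h1 <;> rcases hq.2.1 with h2 | h2 <;> rw [h1] at h2 <;> cases h2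
  · rw [mem_gBox1] at hp hq
    have : c = c' := Fin.ext (by omega)
    rw [this]

lemma gBox_subset_Icc {b : ℕ} {t : ℕ → MStep} {p : Fin 2 × Fin b} :
    gBox b t p ⊆ Finset.Icc 1 (2*b+1) := Finset.filter_subset _ _

def inRow0 {b : ℕ} (S : Fin 2 × Fin b → Finset ℕ) (k : ℕ) : Prop :=
  ∃ c : Fin b, k ∈ S (0, c)

def isMin {b : ℕ} (S : Fin 2 × Fin b → Finset ℕ) (k : ℕ) : Prop :=
  ∃ p, k ∈ S p ∧ ∀ m ∈ S p, k ≤ m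

open Classical in
noncomputable def fstep {b : ℕ} (S : Fin 2 × Fin b → Finset ℕ) (k : ℕ) : MStep :=
  if inRow0 S k then (if isMin S k then .U else .Hr)
  else (if isMin S k then .D else .Hb)

noncomputable def ft {b : ℕ} (S : Fin 2 × Fin b → Finset ℕ) : ℕ → MStep :=
  fun j => fstep S (j+1)

noncomputable def fpath (b : ℕ) (S : Fin 2 × Fin b → Finset ℕ) : Fin (2*b+1) → MStep :=
  fun j => fstep S (j.1+1)

lemma te_fpath (b : ℕ) (S : Fin 2 × Fin b → Finset ℕ) {j : ℕ} (h : j < 2*b+1) :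
    te (2*b+1) (fpath b S) j = ft S j := by
  rw [te_lt _ h]; rfl

lemma fstep_eq_U_iff {b : ℕ} (S : Fin 2 × Fin b → Finset ℕ) (k : ℕ) :
    fstep S k = .U ↔ inRow0 S k ∧ isMin S k := by
  unfold fstep; split_ifs <;> simp_all

lemma fstep_eq_Hr_iff {b : ℕ} (S : Fin 2 × Fin b → Finset ℕ) (k : ℕ) :
    fstep S k = .Hr ↔ inRow0 S k ∧ ¬ isMin S k := by
  unfold fstep; split_ifs <;> simp_all

lemma fstep_eq_D_iff {b : ℕ} (S : Fin 2 × Fin b → Finset ℕ) (k : ℕ) :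
    fstep S k = .D ↔ ¬ inRow0 S k ∧ isMin S k := by
  unfold fstep; split_ifs <;> simp_all

lemma fstep_eq_Hb_iff {b : ℕ} (S : Fin 2 × Fin b → Finset ℕ) (k : ℕ) :
    fstep S k = .Hb ↔ ¬ inRow0 S k ∧ ¬ isMin S k := by
  unfold fstep; split_ifs <;> simp_all

section ForwardLemmas

variable {b : ℕ} {S : Fin 2 × Fin b → Finset ℕ} (hS : IsBSVT2 b S)

include hS

lemma box_unique {k : ℕ} {p q : Fin 2 × Fin b} (hp : k ∈ S p) (hq : k ∈ S q) : p = q := by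
  by_contra hne
  exact (Finset.disjoint_left.1 (hS.2.2.1 p q hne)) hp hq

lemma mem_Icc_of_mem {k : ℕ} {p : Fin 2 × Fin b} (h : k ∈ S p) : 1 ≤ k ∧ k ≤ 2*b+1 := by
  have := (hS.2.1 k).2 ⟨p, h⟩
  simpa [Finset.mem_Icc] using this

lemma isMin_iff {k : ℕ} {p : Fin 2 × Fin b} (hk : k ∈ S p) :
    isMin S k ↔ ∀ m ∈ S p, k ≤ m := by
  constructor
  · rintro ⟨q, hq, hmin⟩
    rw [box_unique hS hq hk] at hmin
    exact hmin
  · intro h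
    exact ⟨p, hk, h⟩

end ForwardLemmas

lemma cnt_eq_card_filter {n : ℕ} (t : ℕ → MStep) (e : MStep) (J : Fin n → ℕ)
    (hinj : Function.Injective J) (h1 : ∀ c, 1 ≤ J c)
    (k : ℕ) (hiff : ∀ j, j < k → (t j = e ↔ ∃ c, J c = j + 1)) :
    cnt t e k = (Finset.univ.filter (fun c => J c ≤ k)).card := by
  have himg : (Finset.range k).filter (fun j => t j = e)
      = (Finset.univ.filter (fun c => J c ≤ k)).image (fun c => J c - 1) := by
    ext j
    simp only [Finset.mem_filter, Finset.mem_range, Finset.mem_image, Finset.mem_univ, true_and]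
    constructor
    · rintro ⟨hjk, hte⟩
      obtain ⟨c, hc⟩ := (hiff j hjk).1 hte
      exact ⟨c, by omega, by omega⟩
    · rintro ⟨c, hck, hcj⟩
      have h1c := h1 c
      have hjk : j < k := by omega
      exact ⟨hjk, (hiff j hjk).2 ⟨c, by omega⟩⟩
  rw [cnt, himg, Finset.card_image_of_injOn]
  intro c _ c' _ hcc
  have h1c := h1 c
  have h1c' := h1 c'
  exact hinj (show J c = J c' by simp only at hcc; omega)

noncomputable def mn {b : ℕ} (S : Fin 2 × Fin b → Finset ℕ) (hS : IsBSVT2 b S)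
    (p : Fin 2 × Fin b) : ℕ := (S p).min' (hS.1 p)

section ForwardLemmas2

variable {b : ℕ} {S : Fin 2 × Fin b → Finset ℕ} (hS : IsBSVT2 b S)

lemma mn_mem (p : Fin 2 × Fin b) : mn S hS p ∈ S p := Finset.min'_mem _ _

lemma mn_le {k : ℕ} {p : Fin 2 × Fin b} (hk : k ∈ S p) : mn S hS p ≤ k :=
  Finset.min'_le _ _ hk

include hS

lemma isMin_iff_eq_mn {k : ℕ} {p : Fin 2 × Fin b} (hk : k ∈ S p) :
    isMin S k ↔ k = mn S hS p := by
  rw [isMin_iff hS hk]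
  constructor
  · intro h
    exact le_antisymm (Finset.le_min' _ _ _ h) (mn_le hS hk)
  · intro h m hm
    rw [h]; exact mn_le hS hm

lemma mn_inj {p q : Fin 2 × Fin b} (h : mn S hS p = mn S hS q) : p = q :=
  box_unique hS (mn_mem hS p) (h ▸ mn_mem hS q)

lemma hiff_row (i : Fin 2) (j : ℕ) :
    ft S j = (if i = 0 then MStep.U else MStep.D) ↔ ∃ c : Fin b, mn S hS (i, c) = j + 1 := by
  have key : fstep S (j+1) = (if i = 0 then MStep.U else MStep.D) ↔
      (∃ c : Fin b, j + 1 ∈ S (i, c)) ∧ isMin S (j+1) := by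
    rcases fin2 i with rfl | rfl
    · simpa [inRow0] using fstep_eq_U_iff S (j+1)
    · rw [if_neg (show ¬((1:Fin 2) = 0) by decide), fstep_eq_D_iff]
      unfold inRow0
      constructor
      · rintro ⟨hn, hmin⟩
        obtain ⟨p, hp, hpmin⟩ := hmin
        obtain ⟨ip, cp⟩ := p
        rcases fin2 ip with rfl | rfl
        · exact absurd ⟨cp, hp⟩ hn
        · exact ⟨⟨cp, hp⟩, ⟨_, hp, hpmin⟩⟩
      · rintro ⟨⟨c, hc⟩, hmin⟩
        refine ⟨?_, hmin⟩
        rintro ⟨c', hc'⟩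
        have := box_unique hS hc hc'
        simp [Prod.ext_iff] at this
  rw [show ft S j = fstep S (j+1) from rfl, key]
  constructor
  · rintro ⟨⟨c, hc⟩, hmin⟩
    exact ⟨c, ((isMin_iff_eq_mn hS hc).1 hmin).symm⟩
  · rintro ⟨c, hc⟩
    have hmem : j + 1 ∈ S (i, c) := hc ▸ mn_mem hS (i, c)
    exact ⟨⟨c, hmem⟩, (isMin_iff_eq_mn hS hmem).2 hc.symm⟩

lemma cnt_row_eq (i : Fin 2) (k : ℕ) :
    cnt (ft S) (if i = 0 then MStep.U else MStep.D) k
      = (Finset.univ.filter (fun c : Fin b => mn S hS (i, c) ≤ k)).card := by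
  apply cnt_eq_card_filter
  · intro c c' h
    have := mn_inj hS h
    simpa [Prod.ext_iff] using this
  · intro c
    exact (mem_Icc_of_mem hS (mn_mem hS (i, c))).1
  · intro j _
    exact hiff_row hS i j

lemma filter_mn_total (i : Fin 2) :
    (Finset.univ.filter (fun c : Fin b => mn S hS (i, c) ≤ 2*b+1)) = Finset.univ := by
  apply Finset.filter_true_of_mem
  intro c _
  have h := (mem_Icc_of_mem hS (mn_mem hS (i, c))).2
  omega

lemma filter_mn_mem {i : Fin 2} {c : Fin b} {k : ℕ} (hk : k ∈ S (i, c)) :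
    (Finset.univ.filter (fun c' : Fin b => mn S hS (i, c') ≤ k)) = Finset.Iic c := by
  ext c'
  simp only [Finset.mem_filter, Finset.mem_univ, true_and, Finset.mem_Iic]
  constructor
  · intro h
    by_contra hcc
    push_neg at hcc
    have hlt : (i, c) < (i, c') := Prod.mk_lt_mk.2 (Or.inr ⟨le_refl _, hcc⟩)
    have := hS.2.2.2.2 _ _ hlt k hk _ (mn_mem hS (i, c'))
    omega
  · intro h
    rcases eq_or_lt_of_le h with rfl | hlt
    · exact mn_le hS hk
    · have hlt' : (i, c') < (i, c) := Prod.mk_lt_mk.2 (Or.inr ⟨le_refl _, hlt⟩)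
      have := hS.2.2.2.2 _ _ hlt' _ (mn_mem hS (i, c')) k hk
      omega

lemma mn_col_lt (c : Fin b) : mn S hS (0, c) < mn S hS (1, c) := by
  have hlt : ((0 : Fin 2), c) < (1, c) :=
    Prod.mk_lt_mk.2 (Or.inl ⟨by decide, le_refl _⟩)
  exact hS.2.2.2.2 _ _ hlt _ (mn_mem hS _) _ (mn_mem hS _)

omit hS in
lemma cnt_te_ft (e : MStep) {k : ℕ} (hk : k ≤ 2*b+1) :
    cnt (te (2*b+1) (fpath b S)) e k = cnt (ft S) e k :=
  cnt_congr e (fun j hj => te_fpath b S (by omega))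

lemma cntU_total : cnt (ft S) MStep.U (2*b+1) = b := by
  have := cnt_row_eq hS 0 (2*b+1)
  rw [if_pos rfl] at this
  rw [this, filter_mn_total hS 0, Finset.card_univ, Fintype.card_fin]

lemma cntD_total : cnt (ft S) MStep.D (2*b+1) = b := by
  have := cnt_row_eq hS 1 (2*b+1)
  rw [if_neg (show ¬((1:Fin 2) = 0) by decide)] at this
  rw [this, filter_mn_total hS 1, Finset.card_univ, Fintype.card_fin]

lemma cntD_le_cntU (k : ℕ) : cnt (ft S) MStep.D k ≤ cnt (ft S) MStep.U k := by
  have h0 := cnt_row_eq hS 0 k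
  have h1 := cnt_row_eq hS 1 k
  rw [if_pos rfl] at h0
  rw [if_neg (show ¬((1:Fin 2) = 0) by decide)] at h1
  rw [h0, h1]
  apply Finset.card_le_card
  intro c hc
  simp only [Finset.mem_filter, Finset.mem_univ, true_and] at hc ⊢
  have := mn_col_lt hS c
  omega

end ForwardLemmas2

section ForwardMain

variable {b : ℕ} {S : Fin 2 × Fin b → Finset ℕ} (hS : IsBSVT2 b S)

include hS

lemma hgt_cnt (j : ℕ) (hj : j ≤ 2*b+1) :
    hgt (2*b+1) (fpath b S) j
      = (cnt (ft S) MStep.U j : ℤ) - (cnt (ft S) MStep.D j : ℤ) := by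
  rw [hgt_eq, cnt_te_ft MStep.U hj, cnt_te_ft MStep.D hj]

lemma F1 : hgt (2*b+1) (fpath b S) (2*b+1) = 0 := by
  rw [hgt_cnt hS _ le_rfl, cntU_total hS, cntD_total hS]
  ring

lemma F2 : ∀ j ≤ 2*b+1, 0 ≤ hgt (2*b+1) (fpath b S) j := by
  intro j hj
  rw [hgt_cnt hS j hj]
  have := cntD_le_cntU hS j
  omega

lemma fstep_eq_H_iff (k : ℕ) :
    (fstep S k = MStep.Hr ∨ fstep S k = MStep.Hb) ↔ ¬ isMin S k := by
  unfold fstep; split_ifs <;> simp_all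

lemma F3 : ∀ j : Fin (2*b+1), fpath b S j = MStep.Hr → hgt (2*b+1) (fpath b S) j ≠ 0 := by
  intro j hj
  have hH : inRow0 S (j.1+1) ∧ ¬ isMin S (j.1+1) := (fstep_eq_Hr_iff S (j.1+1)).1 hj
  obtain ⟨⟨c₀, hc₀⟩, hnm⟩ := hH
  have hjl : (j : ℕ) ≤ 2*b+1 := le_of_lt (by omega)
  rw [hgt_cnt hS j hjl]
  have h0 := cnt_row_eq hS 0 j.1
  have h1 := cnt_row_eq hS 1 j.1
  rw [if_pos rfl] at h0
  rw [if_neg (show ¬((1:Fin 2) = 0) by decide)] at h1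
  have hmn0 : mn S hS (0, c₀) ≤ (j : ℕ) := by
    have hle := mn_le hS hc₀
    have hne : (j.1+1 : ℕ) ≠ mn S hS (0, c₀) := fun h => hnm ((isMin_iff_eq_mn hS hc₀).2 h)
    omega
  have hmn1 : ¬ (mn S hS (1, c₀) ≤ (j : ℕ)) := by
    have hlt : ((0 : Fin 2), c₀) < (1, c₀) := Prod.mk_lt_mk.2 (Or.inl ⟨by decide, le_refl _⟩)
    have := hS.2.2.2.2 _ _ hlt _ hc₀ _ (mn_mem hS (1, c₀))
    omega
  have hcard : cnt (ft S) MStep.D j.1 < cnt (ft S) MStep.U j.1 := by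
    rw [h0, h1]
    apply Finset.card_lt_card
    rw [Finset.ssubset_iff_of_subset]
    · refine ⟨c₀, ?_, ?_⟩
      · simp only [Finset.mem_filter, Finset.mem_univ, true_and]; exact hmn0
      · simp only [Finset.mem_filter, Finset.mem_univ, true_and]; exact hmn1
    · intro c hc
      simp only [Finset.mem_filter, Finset.mem_univ, true_and] at hc ⊢
      have := mn_col_lt hS c
      omega
  omega

lemma F4 : ∀ j : Fin (2*b+1), fpath b S j = MStep.Hb →
    ∃ k : Fin (2*b+1), k < j ∧ fpath b S k = MStep.D := by
  intro j hj
  have hH : ¬ inRow0 S (j.1+1) ∧ ¬ isMin S (j.1+1) := (fstep_eq_Hb_iff S (j.1+1)).1 hj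
  obtain ⟨hnr, hnm⟩ := hH
  have hcov : ∃ p, (j.1+1) ∈ S p := (hS.2.1 (j.1+1)).1 (by simp [Finset.mem_Icc]; omega)
  obtain ⟨⟨i, c₀⟩, hc₀⟩ := hcov
  rcases fin2 i with rfl | rfl
  · exact absurd ⟨c₀, hc₀⟩ hnr
  have hmle := mn_le hS hc₀
  have hne : (j.1+1 : ℕ) ≠ mn S hS (1, c₀) := fun h => hnm ((isMin_iff_eq_mn hS hc₀).2 h)
  set m := mn S hS (1, c₀) with hm
  have hm1 : 1 ≤ m := (mem_Icc_of_mem hS (mn_mem hS (1, c₀))).1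
  have hmlt : m < j.1 + 1 := by omega
  refine ⟨⟨m - 1, by omega⟩, by simp [Fin.lt_def]; omega, ?_⟩
  show fstep S (m - 1 + 1) = MStep.D
  rw [show m - 1 + 1 = m by omega]
  rw [fstep_eq_D_iff]
  constructor
  · rintro ⟨c', hc'⟩
    have := box_unique hS hc' (mn_mem hS (1, c₀))
    simp [Prod.ext_iff] at this
  · exact ⟨(1, c₀), mn_mem hS (1, c₀), fun x hx => Finset.min'_le _ _ hx⟩

lemma F5 :
    (Finset.univ.filter fun j : Fin (2*b+1) =>
      fpath b S j = MStep.Hr ∨ fpath b S j = MStep.Hb).card = 1 := by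
  obtain ⟨p₀, h2, h1⟩ := hS.2.2.2.1
  obtain ⟨x, y, hxy, hset⟩ := Finset.card_eq_two.1 h2
  have hxy' : ∃ x y : ℕ, x < y ∧ S p₀ = {x, y} := by
    rcases lt_or_gt_of_ne hxy with h | h
    · exact ⟨x, y, h, hset⟩
    · exact ⟨y, x, h, by rw [hset, Finset.pair_comm]⟩
  clear hxy hset
  obtain ⟨x, y, hxy, hset⟩ := hxy'
  have hxm : x ∈ S p₀ := by rw [hset]; simp
  have hym : y ∈ S p₀ := by rw [hset]; simp
  have hyIcc := mem_Icc_of_mem hS hym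
  have hkey : ∀ j : Fin (2*b+1),
      ((fpath b S j = MStep.Hr ∨ fpath b S j = MStep.Hb) ↔ (j : ℕ) = y - 1) := by
    intro j
    rw [show (fpath b S j = MStep.Hr ∨ fpath b S j = MStep.Hb) ↔ ¬ isMin S (j.1+1) from
      fstep_eq_H_iff hS (j.1+1)]
    constructor
    · intro hnm
      have hcov : ∃ p, (j.1+1) ∈ S p := (hS.2.1 (j.1+1)).1 (by simp [Finset.mem_Icc]; omega)
      obtain ⟨q, hq⟩ := hcov
      by_cases hqp : q = p₀
      · subst hqp
        rw [hset] at hq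
        simp only [Finset.mem_insert, Finset.mem_singleton] at hq
        rcases hq with hq | hq
        · exfalso
          apply hnm
          refine ⟨q, by rw [hset]; simp [hq], ?_⟩
          intro m hm
          rw [hset] at hm
          simp only [Finset.mem_insert, Finset.mem_singleton] at hm
          rcases hm with rfl | rfl <;> omega
        · omega
      · exfalso
        obtain ⟨a, ha⟩ := Finset.card_eq_one.1 (h1 q hqp)
        apply hnm
        refine ⟨q, hq, ?_⟩
        intro m hm
        rw [ha] at hq hm
        simp only [Finset.mem_singleton] at hq hm
        omega
    · intro hjy
      have hj1 : j.1 + 1 = y := by omega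
      intro hmin
      obtain ⟨q, hq, hqmin⟩ := hmin
      rw [hj1] at hq hqmin
      have := box_unique hS hq hym
      subst this
      exact absurd (hqmin x hxm) (by omega)
  have : (Finset.univ.filter fun j : Fin (2*b+1) =>
      fpath b S j = MStep.Hr ∨ fpath b S j = MStep.Hb)
      = {(⟨y - 1, by omega⟩ : Fin (2*b+1))} := by
    ext j
    simp only [Finset.mem_filter, Finset.mem_univ, true_and, Finset.mem_singleton]
    rw [hkey j, Fin.ext_iff]
  rw [this, Finset.card_singleton]

lemma F6_sub {k : ℕ} {p : Fin 2 × Fin b} (hk : k ∈ S p) :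
    k ∈ gBox b (te (2*b+1) (fpath b S)) p := by
  have hIcc := mem_Icc_of_mem hS hk
  have hstep : te (2*b+1) (fpath b S) (k-1) = fstep S k := by
    rw [te_fpath b S (show k - 1 < 2*b+1 by omega)]
    show fstep S (k-1+1) = fstep S k
    rw [show k-1+1 = k by omega]
  obtain ⟨i, c⟩ := p
  rcases fin2 i with rfl | rfl
  · rw [mem_gBox0]
    refine ⟨⟨hIcc.1, hIcc.2⟩, ?_, ?_⟩
    · rw [hstep]
      by_cases hm : isMin S k
      · exact Or.inl ((fstep_eq_U_iff S k).2 ⟨⟨c, hk⟩, hm⟩)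
      · exact Or.inr ((fstep_eq_Hr_iff S k).2 ⟨⟨c, hk⟩, hm⟩)
    · rw [cnt_te_ft MStep.U hIcc.2]
      have h0 := cnt_row_eq hS 0 k
      rw [if_pos rfl] at h0
      rw [h0, filter_mn_mem hS hk, Fin.card_Iic]
  · rw [mem_gBox1]
    refine ⟨⟨hIcc.1, hIcc.2⟩, ?_, ?_⟩
    · rw [hstep]
      have hnr : ¬ inRow0 S k := by
        rintro ⟨c', hc'⟩
        have := box_unique hS hc' hk
        simp [Prod.ext_iff] at this
      by_cases hm : isMin S k
      · exact Or.inl ((fstep_eq_D_iff S k).2 ⟨hnr, hm⟩)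
      · exact Or.inr ((fstep_eq_Hb_iff S k).2 ⟨hnr, hm⟩)
    · rw [cnt_te_ft MStep.D hIcc.2]
      have h1 := cnt_row_eq hS 1 k
      rw [if_neg (show ¬((1:Fin 2) = 0) by decide)] at h1
      rw [h1, filter_mn_mem hS hk, Fin.card_Iic]

lemma F6 : gBox b (te (2*b+1) (fpath b S)) = S := by
  funext p
  ext k
  constructor
  · intro hk
    have hIcc : k ∈ Finset.Icc 1 (2*b+1) := gBox_subset_Icc hk
    obtain ⟨q, hq⟩ := (hS.2.1 k).1 hIcc
    have := gBox_eq hk (F6_sub hS hq)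
    exact this ▸ hq
  · exact F6_sub hS

end ForwardMain

def GoodPath (b : ℕ) (t : ℕ → MStep) : Prop :=
  cnt t MStep.U (2*b+1) = b ∧ cnt t MStep.D (2*b+1) = b ∧
  (∀ j ≤ 2*b+1, cnt t MStep.D j ≤ cnt t MStep.U j) ∧
  (∀ j < 2*b+1, t j = MStep.Hr → cnt t MStep.D j < cnt t MStep.U j) ∧
  (∀ j < 2*b+1, t j = MStep.Hb → ∃ k < j, t k = MStep.D)

lemma goodPath_of_RBM {b : ℕ} {s : Fin (2*b+1) → MStep} (hR : IsRBM (2*b+1) s)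
    (hone : (Finset.univ.filter fun j => s j = MStep.Hr ∨ s j = MStep.Hb).card = 1) :
    GoodPath b (te (2*b+1) s) := by
  have hH : cnt (te (2*b+1) s) MStep.Hr (2*b+1) + cnt (te (2*b+1) s) MStep.Hb (2*b+1) = 1 := by
    have himg : (Finset.range (2*b+1)).filter (fun j => (te (2*b+1) s) j = MStep.Hr ∨ (te (2*b+1) s) j = MStep.Hb)
        = (Finset.univ.filter fun j : Fin (2*b+1) =>
            s j = MStep.Hr ∨ s j = MStep.Hb).image Fin.val := by
      ext j
      simp only [Finset.mem_filter, Finset.mem_range, Finset.mem_image, Finset.mem_univ,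
        true_and]
      constructor
      · rintro ⟨hj, hs⟩
        rw [te_lt s hj] at hs
        exact ⟨⟨j, hj⟩, hs, rfl⟩
      · rintro ⟨j', hj', rfl⟩
        refine ⟨j'.isLt, ?_⟩
        rw [te_lt s j'.isLt]
        simpa using hj'
    have hdisj : Disjoint ((Finset.range (2*b+1)).filter (fun j => (te (2*b+1) s) j = MStep.Hr))
        ((Finset.range (2*b+1)).filter (fun j => (te (2*b+1) s) j = MStep.Hb)) := by
      rw [Finset.disjoint_left]
      intro a ha hb
      simp only [Finset.mem_filter] at ha hb
      rw [ha.2] at hb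
      exact absurd hb.2 (by simp)
    have : cnt (te (2*b+1) s) MStep.Hr (2*b+1) + cnt (te (2*b+1) s) MStep.Hb (2*b+1)
        = ((Finset.range (2*b+1)).filter (fun j => (te (2*b+1) s) j = MStep.Hr ∨ (te (2*b+1) s) j = MStep.Hb)).card := by
      rw [Finset.filter_or, Finset.card_union_of_disjoint hdisj]; rfl
    rw [this, himg, Finset.card_image_of_injective _ Fin.val_injective, hone]
  have hUD : cnt (te (2*b+1) s) MStep.U (2*b+1) = cnt (te (2*b+1) s) MStep.D (2*b+1) := by
    have := hgt_eq (2*b+1) s (2*b+1)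
    rw [hR.1] at this
    omega
  have htot := cnt_total (te (2*b+1) s) (2*b+1)
  refine ⟨by omega, by omega, ?_, ?_, ?_⟩
  · intro j hj
    have h := hR.2.1 j hj
    rw [hgt_eq] at h
    omega
  · intro j hj hHr
    have h := hR.2.2.1 ⟨j, hj⟩ (by rw [← te_lt s hj]; exact hHr)
    have h2 := hR.2.1 j (le_of_lt hj)
    rw [hgt_eq] at h h2
    simp only at h h2
    omega
  · intro j hj hHb
    obtain ⟨k, hk, hkD⟩ := hR.2.2.2 ⟨j, hj⟩ (by rw [← te_lt s hj]; exact hHb)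
    exact ⟨k.1, hk, by rw [te_lt s k.isLt]; exact hkD⟩

section Backward

variable {b : ℕ} {t : ℕ → MStep} (hg : GoodPath b t)

include hg

lemma cntU_le_b {k : ℕ} (hk : k ≤ 2*b+1) : cnt t MStep.U k ≤ b :=
  hg.1 ▸ cnt_mono t _ hk

lemma cntD_le_b {k : ℕ} (hk : k ≤ 2*b+1) : cnt t MStep.D k ≤ b :=
  hg.2.1 ▸ cnt_mono t _ hk

omit hg in
lemma cnt_pos_self {e : MStep} {k : ℕ} (h1 : 1 ≤ k) (h : t (k-1) = e) : 1 ≤ cnt t e k := by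
  have : k - 1 ∈ (Finset.range k).filter (fun j => t j = e) := by
    simp only [Finset.mem_filter, Finset.mem_range]
    exact ⟨by omega, h⟩
  have := Finset.card_pos.2 ⟨_, this⟩
  exact this

lemma B_cover {k : ℕ} (h1 : 1 ≤ k) (h2 : k ≤ 2*b+1) : ∃ p, k ∈ gBox b t p := by
  cases hstep : t (k-1) with
  | U =>
      have hle : cnt t MStep.U k ≤ b := cntU_le_b hg h2
      have hpos : 1 ≤ cnt t MStep.U k := cnt_pos_self h1 hstep
      refine ⟨(0, ⟨cnt t MStep.U k - 1, by omega⟩), ?_⟩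
      rw [mem_gBox0]
      exact ⟨⟨h1, h2⟩, Or.inl hstep, by simp; omega⟩
  | Hr =>
      have hlt := hg.2.2.2.1 (k-1) (by omega) hstep
      have hle : cnt t MStep.U k ≤ b := cntU_le_b hg h2
      have hpos : 1 ≤ cnt t MStep.U k := by
        have := cnt_mono t MStep.U (show k - 1 ≤ k by omega)
        omega
      refine ⟨(0, ⟨cnt t MStep.U k - 1, by omega⟩), ?_⟩
      rw [mem_gBox0]
      exact ⟨⟨h1, h2⟩, Or.inr hstep, by simp; omega⟩
  | D =>
      have hle : cnt t MStep.D k ≤ b := cntD_le_b hg h2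
      have hpos : 1 ≤ cnt t MStep.D k := cnt_pos_self h1 hstep
      refine ⟨(1, ⟨cnt t MStep.D k - 1, by omega⟩), ?_⟩
      rw [mem_gBox1]
      exact ⟨⟨h1, h2⟩, Or.inl hstep, by simp; omega⟩
  | Hb =>
      obtain ⟨k', hk', hk'D⟩ := hg.2.2.2.2 (k-1) (by omega) hstep
      have hle : cnt t MStep.D k ≤ b := cntD_le_b hg h2
      have hpos : 1 ≤ cnt t MStep.D k := by
        have : k' ∈ (Finset.range k).filter (fun j => t j = MStep.D) := by
          simp only [Finset.mem_filter, Finset.mem_range]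
          exact ⟨by omega, hk'D⟩
        exact Finset.card_pos.2 ⟨_, this⟩
      refine ⟨(1, ⟨cnt t MStep.D k - 1, by omega⟩), ?_⟩
      rw [mem_gBox1]
      exact ⟨⟨h1, h2⟩, Or.inr hstep, by simp; omega⟩

lemma B_nonempty (p : Fin 2 × Fin b) : (gBox b t p).Nonempty := by
  obtain ⟨i, c⟩ := p
  rcases fin2 i with rfl | rfl
  · obtain ⟨k, hk1, hkn, hcnt, hstep, -⟩ :=
      cnt_least t MStep.U (v := c.1+1) (by omega) (by rw [hg.1]; omega)
    exact ⟨k, mem_gBox0.2 ⟨⟨hk1, hkn⟩, Or.inl hstep, hcnt⟩⟩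
  · obtain ⟨k, hk1, hkn, hcnt, hstep, -⟩ :=
      cnt_least t MStep.D (v := c.1+1) (by omega) (by rw [hg.2.1]; omega)
    exact ⟨k, mem_gBox1.2 ⟨⟨hk1, hkn⟩, Or.inl hstep, hcnt⟩⟩

lemma B_cover_iff (k : ℕ) : k ∈ Finset.Icc 1 (2*b+1) ↔ ∃ p, k ∈ gBox b t p := by
  constructor
  · intro hk
    rw [Finset.mem_Icc] at hk
    exact B_cover hg hk.1 hk.2
  · rintro ⟨p, hp⟩
    exact gBox_subset_Icc hp

lemma B_biUnion : Finset.univ.biUnion (gBox b t) = Finset.Icc 1 (2*b+1) := by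
  ext k
  rw [Finset.mem_biUnion]
  rw [B_cover_iff hg]
  simp

lemma B_card_sum : ∑ p : Fin 2 × Fin b, (gBox b t p).card = 2*b+1 := by
  have hdisj : ∀ p ∈ (Finset.univ : Finset (Fin 2 × Fin b)), ∀ q ∈ Finset.univ,
      p ≠ q → Disjoint (gBox b t p) (gBox b t q) := by
    intro p _ q _ hpq
    rw [Finset.disjoint_left]
    intro k hk hk'
    exact hpq (gBox_eq hk hk')
  have := Finset.card_biUnion hdisj
  rw [B_biUnion hg] at this
  rw [← this, Nat.card_Icc]
  omega

lemma B_doubleton : ∃ p₀, (gBox b t p₀).card = 2 ∧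
    ∀ p, p ≠ p₀ → (gBox b t p).card = 1 := by
  have hsum := B_card_sum hg
  have hpos : ∀ p : Fin 2 × Fin b, 1 ≤ (gBox b t p).card := by
    intro p
    exact Finset.card_pos.2 (B_nonempty hg p)
  have hcu : Fintype.card (Fin 2 × Fin b) = 2*b := by simp
  have hsum1 : ∑ p : Fin 2 × Fin b, ((gBox b t p).card - 1) = 1 := by
    have h1 : ∑ p : Fin 2 × Fin b, (gBox b t p).card
        = ∑ p : Fin 2 × Fin b, (((gBox b t p).card - 1) + 1) := by
      apply Finset.sum_congr rfl
      intro p _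
      have := hpos p
      omega
    rw [h1, Finset.sum_add_distrib, Finset.sum_const, Finset.card_univ, hcu] at hsum
    simp at hsum
    omega
  have hex : ∃ p₀ : Fin 2 × Fin b, (gBox b t p₀).card - 1 = 1 := by
    by_contra hc
    push_neg at hc
    have : ∀ p ∈ (Finset.univ : Finset (Fin 2 × Fin b)), (gBox b t p).card - 1 = 0 := by
      intro p _
      have hle : (gBox b t p).card - 1 ≤ ∑ q : Fin 2 × Fin b, ((gBox b t q).card - 1) :=
        Finset.single_le_sum (f := fun p => (gBox b t p).card - 1)
          (fun q _ => Nat.zero_le _) (Finset.mem_univ p)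
      have := hc p
      omega
    rw [Finset.sum_congr rfl this] at hsum1
    simp at hsum1
  obtain ⟨p₀, hp₀⟩ := hex
  refine ⟨p₀, by have := hpos p₀; omega, ?_⟩
  intro p hp
  have hrest : ∑ q ∈ Finset.univ.erase p₀, ((gBox b t q).card - 1) = 0 := by
    have h : ∑ q ∈ Finset.univ.erase p₀, ((gBox b t q).card - 1) + ((gBox b t p₀).card - 1)
        = ∑ q : Fin 2 × Fin b, ((gBox b t q).card - 1) :=
      Finset.sum_erase_add Finset.univ _ (Finset.mem_univ p₀)
    omega
  have hz := (Finset.sum_eq_zero_iff).1 hrest p (Finset.mem_erase.2 ⟨hp, Finset.mem_univ p⟩)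
  have := hpos p
  omega

lemma B_order : ∀ p q : Fin 2 × Fin b, p < q →
    ∀ x ∈ gBox b t p, ∀ y ∈ gBox b t q, x < y := by
  rintro ⟨i, c⟩ ⟨i', c'⟩ hpq x hx y hy
  have hle : ((i, c) : Fin 2 × Fin b) ≤ (i', c') := le_of_lt hpq
  rw [Prod.le_def] at hle
  have hne : ((i, c) : Fin 2 × Fin b) ≠ (i', c') := ne_of_lt hpq
  rcases fin2 i with rfl | rfl <;> rcases fin2 i' with rfl | rfl
  · -- both row 0
    rw [mem_gBox0] at hx hy
    have hcc : c < c' := by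
      rcases lt_or_eq_of_le hle.2 with h | h
      · exact h
      · have h2 : c = c' := h
        exact absurd (by rw [h2]) hne
    have hcnt : cnt t MStep.U x < cnt t MStep.U y := by
      have : (c : ℕ) < (c' : ℕ) := hcc
      omega
    exact lt_of_cnt_lt t MStep.U hcnt
  · -- row 0 to row 1 : the ballot case
    rw [mem_gBox0] at hx
    rw [mem_gBox1] at hy
    have hcc : (c : ℕ) ≤ (c' : ℕ) := hle.2
    by_contra hxy
    push_neg at hxy   -- y ≤ x
    have hkey : cnt t MStep.D (x-1) < cnt t MStep.U x := by
      rcases hx.2.1 with hU | hHr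
      · have hx1 : cnt t MStep.U x = cnt t MStep.U (x-1) + 1 := by
          have := cnt_succ t MStep.U (x-1)
          rw [show x - 1 + 1 = x by omega] at this
          rw [this, if_pos hU]
        have := hg.2.2.1 (x-1) (by omega)
        omega
      · have := hg.2.2.2.1 (x-1) (by omega) hHr
        have hmono := cnt_mono t MStep.U (show x - 1 ≤ x by omega)
        omega
    have hxy' : x - 1 < y := by
      apply lt_of_cnt_lt t MStep.D
      omega
    have hyx : y = x := by omega
    rcases hx.2.1 with h1 | h1 <;> rcases hy.2.1 with h2 | h2 <;>
      rw [hyx] at h2 <;> rw [h1] at h2 <;> cases h2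
  · -- row 1 to row 0: impossible
    have hbad : ((1:Fin 2)) ≤ 0 := hle.1
    exact absurd hbad (by decide)
  · -- both row 1
    rw [mem_gBox1] at hx hy
    have hcc : c < c' := by
      rcases lt_or_eq_of_le hle.2 with h | h
      · exact h
      · have h2 : c = c' := h
        exact absurd (by rw [h2]) hne
    have hcnt : cnt t MStep.D x < cnt t MStep.D y := by
      have : (c : ℕ) < (c' : ℕ) := hcc
      omega
    exact lt_of_cnt_lt t MStep.D hcnt

lemma B_isBSVT2 : IsBSVT2 b (gBox b t) :=
  ⟨B_nonempty hg, B_cover_iff hg, 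
   fun p q hpq => Finset.disjoint_left.2 (fun {k} hk hk' => hpq (gBox_eq hk hk')),
   B_doubleton hg, B_order hg⟩

lemma B_fpath {k : ℕ} (h1 : 1 ≤ k) (h2 : k ≤ 2*b+1) :
    fstep (gBox b t) k = t (k-1) := by
  cases hstep : t (k-1) with
  | U =>
      rw [fstep_eq_U_iff]
      have hle : cnt t MStep.U k ≤ b := cntU_le_b hg h2
      have hpos : 1 ≤ cnt t MStep.U k := cnt_pos_self h1 hstep
      have hmem : k ∈ gBox b t (0, ⟨cnt t MStep.U k - 1, by omega⟩) :=
        mem_gBox0.2 ⟨⟨h1, h2⟩, Or.inl hstep, by simp; omega⟩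
      refine ⟨⟨_, hmem⟩, ⟨_, hmem, ?_⟩⟩
      intro m hm
      rw [mem_gBox0] at hm
      by_contra hmk
      push_neg at hmk
      have hst : cnt t MStep.U k = cnt t MStep.U (k-1) + 1 := by
        have := cnt_succ t MStep.U (k-1)
        rw [show k - 1 + 1 = k by omega] at this
        rw [this, if_pos hstep]
      have := cnt_mono t MStep.U (show m ≤ k - 1 by omega)
      simp at hm
      omega
  | Hr =>
      rw [fstep_eq_Hr_iff]
      have hlt := hg.2.2.2.1 (k-1) (by omega) hstep
      have hle : cnt t MStep.U k ≤ b := cntU_le_b hg h2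
      have hpos : 1 ≤ cnt t MStep.U k := by
        have := cnt_mono t MStep.U (show k - 1 ≤ k by omega)
        omega
      have hmem : k ∈ gBox b t (0, ⟨cnt t MStep.U k - 1, by omega⟩) :=
        mem_gBox0.2 ⟨⟨h1, h2⟩, Or.inr hstep, by simp; omega⟩
      refine ⟨⟨_, hmem⟩, ?_⟩
      rintro ⟨q, hq, hqmin⟩
      have hq' := gBox_eq hq hmem
      subst hq'
      obtain ⟨k₀, hk₀1, hk₀n, hcnt₀, hstep₀, hmin₀⟩ :=
        cnt_least t MStep.U (n := 2*b+1) (v := cnt t MStep.U k) hpos (by rw [hg.1]; omega)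
      have hk₀mem : k₀ ∈ gBox b t (0, ⟨cnt t MStep.U k - 1, by omega⟩) :=
        mem_gBox0.2 ⟨⟨hk₀1, hk₀n⟩, Or.inl hstep₀, by simp; omega⟩
      have h1' := hqmin k₀ hk₀mem
      have h2' := hmin₀ k rfl
      have : k₀ = k := by omega
      rw [this] at hstep₀
      rw [hstep₀] at hstep
      cases hstep
  | D =>
      rw [fstep_eq_D_iff]
      have hle : cnt t MStep.D k ≤ b := cntD_le_b hg h2
      have hpos : 1 ≤ cnt t MStep.D k := cnt_pos_self h1 hstep
      have hmem : k ∈ gBox b t (1, ⟨cnt t MStep.D k - 1, by omega⟩) :=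
        mem_gBox1.2 ⟨⟨h1, h2⟩, Or.inl hstep, by simp; omega⟩
      constructor
      · rintro ⟨c', hc'⟩
        rw [mem_gBox0] at hc'
        rcases hc'.2.1 with h' | h' <;> rw [hstep] at h' <;> cases h'
      · refine ⟨_, hmem, ?_⟩
        intro m hm
        rw [mem_gBox1] at hm
        by_contra hmk
        push_neg at hmk
        have hst : cnt t MStep.D k = cnt t MStep.D (k-1) + 1 := by
          have := cnt_succ t MStep.D (k-1)
          rw [show k - 1 + 1 = k by omega] at this
          rw [this, if_pos hstep]
        have := cnt_mono t MStep.D (show m ≤ k - 1 by omega)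
        simp at hm
        omega
  | Hb =>
      rw [fstep_eq_Hb_iff]
      obtain ⟨k', hk', hk'D⟩ := hg.2.2.2.2 (k-1) (by omega) hstep
      have hle : cnt t MStep.D k ≤ b := cntD_le_b hg h2
      have hpos : 1 ≤ cnt t MStep.D k := by
        have : k' ∈ (Finset.range k).filter (fun j => t j = MStep.D) := by
          simp only [Finset.mem_filter, Finset.mem_range]
          exact ⟨by omega, hk'D⟩
        exact Finset.card_pos.2 ⟨_, this⟩
      have hmem : k ∈ gBox b t (1, ⟨cnt t MStep.D k - 1, by omega⟩) :=
        mem_gBox1.2 ⟨⟨h1, h2⟩, Or.inr hstep, by simp; omega⟩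
      constructor
      · rintro ⟨c', hc'⟩
        rw [mem_gBox0] at hc'
        rcases hc'.2.1 with h' | h' <;> rw [hstep] at h' <;> cases h'
      · rintro ⟨q, hq, hqmin⟩
        have hq' := gBox_eq hq hmem
        subst hq'
        obtain ⟨k₀, hk₀1, hk₀n, hcnt₀, hstep₀, hmin₀⟩ :=
          cnt_least t MStep.D (n := 2*b+1) (v := cnt t MStep.D k) hpos (by rw [hg.2.1]; omega)
        have hk₀mem : k₀ ∈ gBox b t (1, ⟨cnt t MStep.D k - 1, by omega⟩) :=
          mem_gBox1.2 ⟨⟨hk₀1, hk₀n⟩, Or.inl hstep₀, by simp; omega⟩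
        have h1' := hqmin k₀ hk₀mem
        have h2' := hmin₀ k rfl
        have : k₀ = k := by omega
        rw [this] at hstep₀
        rw [hstep₀] at hstep
        cases hstep

end Backward

lemma F_RBM {b : ℕ} {S : Fin 2 × Fin b → Finset ℕ} (hS : IsBSVT2 b S) :
    IsRBM (2*b+1) (fpath b S) :=
  ⟨F1 hS, F2 hS, F3 hS, F4 hS⟩

/-- standard barely set-valued tableaux of shape `2×b` are in bijection
with restricted bicolored Motzkin paths of length `2b+1` with exactly one horizontal
step. -/
theorem stmt_16 (b : ℕ) (hb : 1 ≤ b) :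
    Nonempty
      ({S : Fin 2 × Fin b → Finset ℕ // IsBSVT2 b S} ≃
        {s : Fin (2 * b + 1) → MStep //
          IsRBM (2 * b + 1) s ∧
          (Finset.univ.filter fun j => s j = MStep.Hr ∨ s j = MStep.Hb).card = 1}) := by
  let f : {S : Fin 2 × Fin b → Finset ℕ // IsBSVT2 b S} →
      {s : Fin (2 * b + 1) → MStep //
        IsRBM (2 * b + 1) s ∧
        (Finset.univ.filter fun j => s j = MStep.Hr ∨ s j = MStep.Hb).card = 1} :=
    fun Sp => ⟨fpath b Sp.1, F_RBM Sp.2, F5 Sp.2⟩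
  have hinj : Function.Injective f := by
    rintro ⟨S, hS⟩ ⟨S', hS'⟩ heq
    simp only [f, Subtype.mk.injEq] at heq
    apply Subtype.ext
    have h6 := F6 hS
    have h6' := F6 hS'
    rw [heq] at h6
    exact h6.symm.trans h6'
  have hsurj : Function.Surjective f := by
    rintro ⟨s, hR, hone⟩
    have hg := goodPath_of_RBM hR hone
    refine ⟨⟨gBox b (te (2*b+1) s), B_isBSVT2 hg⟩, ?_⟩
    simp only [f]
    apply Subtype.ext
    funext j
    show fstep (gBox b (te (2*b+1) s)) (j.1+1) = s j
    have hfp := B_fpath hg (k := j.1+1) (by omega) (show j.1+1 ≤ 2*b+1 by omega)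
    rw [hfp, show j.1 + 1 - 1 = j.1 by omega, te_lt s j.isLt]
  exact ⟨Equiv.ofBijective f ⟨hinj, hsurj⟩⟩
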